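/- Let n ≥ 1 and 1 ≤ m ≤ n−1 be integers, N = 2^n, and let s, t ∈ {0, …, N−1}. Write s = q·2^{n−m} + r with 0 ≤ q < 2^m, 0 ≤ r < 2^{n−m}, and t = u·2^m + v with 0 ≤ u < 2^{n−m}, 0 ≤ v < 2^m. Then exp(−2πi·s·t/2^n) = exp(−2πi·q·v/2^m) · exp(−2πi·r·u/2^{n−m}) · exp(−2πi·r·v/2^n). -/
import Mathlib


/-- Factorization of a DFT entry: for `N = 2^n`, `s = q·2^(n-m) + r`,
`t = u·2^m + v`, we have
`exp(−2πi·s·t/2^n) = exp(−2πi·q·v/2^m) · exp(−2πi·r·u/2^(n−m)) · exp(−2πi·r·v/2^n)`. -/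
theorem dft_entry_factorization (n m : ℕ) (hn : 1 ≤ n) (hm1 : 1 ≤ m) (hm2 : m ≤ n - 1)
    (q r u v s t : ℕ) (hq : q < 2 ^ m) (hr : r < 2 ^ (n - m))
    (hu : u < 2 ^ (n - m)) (hv : v < 2 ^ m)
    (hs : s = q * 2 ^ (n - m) + r) (ht : t = u * 2 ^ m + v)
    (hsN : s < 2 ^ n) (htN : t < 2 ^ n) :
    Complex.exp (-2 * (Real.pi : ℂ) * Complex.I * (s : ℂ) * (t : ℂ) / 2 ^ n) =
      Complex.exp (-2 * (Real.pi : ℂ) * Complex.I * (q : ℂ) * (v : ℂ) / 2 ^ m) *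
        Complex.exp (-2 * (Real.pi : ℂ) * Complex.I * (r : ℂ) * (u : ℂ) / 2 ^ (n - m)) *
        Complex.exp (-2 * (Real.pi : ℂ) * Complex.I * (r : ℂ) * (v : ℂ) / 2 ^ n) := by
  have hmn : m ≤ n := le_trans hm2 (Nat.sub_le n 1)
  have hpow : (2 : ℂ) ^ m * (2 : ℂ) ^ (n - m) = (2 : ℂ) ^ n := by
    rw [← pow_add, Nat.add_sub_cancel' hmn]
  have h2m : (2 : ℂ) ^ m ≠ 0 := pow_ne_zero _ two_ne_zero
  have h2nm : (2 : ℂ) ^ (n - m) ≠ 0 := pow_ne_zero _ two_ne_zero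
  have h2n : (2 : ℂ) ^ n ≠ 0 := pow_ne_zero _ two_ne_zero
  rw [← Complex.exp_add, ← Complex.exp_add]
  have key : -2 * (Real.pi : ℂ) * Complex.I * (s : ℂ) * (t : ℂ) / 2 ^ n =
      (-2 * (Real.pi : ℂ) * Complex.I * (q : ℂ) * (v : ℂ) / 2 ^ m +
        -2 * (Real.pi : ℂ) * Complex.I * (r : ℂ) * (u : ℂ) / 2 ^ (n - m) +
        -2 * (Real.pi : ℂ) * Complex.I * (r : ℂ) * (v : ℂ) / 2 ^ n) +
      (-((q : ℂ) * u)) * (2 * (Real.pi : ℂ) * Complex.I) := by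
    subst hs ht
    push_cast
    field_simp
    rw [← hpow]
    ring
  rw [key, Complex.exp_add]
  have : Complex.exp ((-((q : ℂ) * u)) * (2 * (Real.pi : ℂ) * Complex.I)) = 1 := by
    have := Complex.exp_int_mul_two_pi_mul_I (-((q : ℤ) * u))
    simpa using this
  rw [this, mul_one]
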